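/- arXiv:1811.01406 — 4 statements merged into one kernel-verified Lean document; each statement's English description precedes it below -/
import Mathlib

section
/- Let $h:\mathbb{R}^d\to\mathbb{R}$ be continuous and bounded below, and suppose $\liminf_{M\to\infty}\inf_{\|x\|=M} h(x)/M > 0$. Then $\lim_{\varepsilon\to 0}\varepsilon\log\int_{\mathbb{R}^d} e^{-h(x)/\varepsilon}\,dx = -\inf_{x\in\mathbb{R}^d} h(x)$. -/
open Filter MeasureTheory Real

section LaplaceAux
open Asymptotics Metric

lemma integrable_exp_neg_mul_norm {d : ℕ} {b : ℝ} (hb : 0 < b) :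
    Integrable (fun x : EuclideanSpace ℝ (Fin d) => Real.exp (-(b * ‖x‖))) := by
  set n : ℕ := d + 1 with hn
  have hcont : Continuous fun x : EuclideanSpace ℝ (Fin d) => Real.exp (-(b * ‖x‖)) := by
    fun_prop
  have hg : Integrable (fun x : EuclideanSpace ℝ (Fin d) => ((1 + ‖x‖) ^ n)⁻¹) := by
    have hnr : ((Module.finrank ℝ (EuclideanSpace ℝ (Fin d))) : ℝ) < (n : ℝ) := by
      simp [hn, finrank_euclideanSpace_fin]
    refine (integrable_one_add_norm (E := EuclideanSpace ℝ (Fin d)) (μ := volume) hnr).congr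
      (Filter.Eventually.of_forall fun x => ?_)
    show (1 + ‖x‖) ^ (-(n : ℝ)) = ((1 + ‖x‖) ^ n)⁻¹
    rw [← Real.rpow_natCast (1 + ‖x‖) n, ← Real.rpow_neg (by positivity)]
  have h2 : (fun t : ℝ => Real.exp (-(b * t))) =O[atTop] (fun t : ℝ => ((1 + t) ^ n)⁻¹) := by
    have hT : ∀ᶠ t : ℝ in atTop, (b * t) ^ n * Real.exp (-(b * t)) < 1 := by
      have hc : Tendsto (fun t : ℝ => (b * t) ^ n * Real.exp (-(b * t))) atTop (nhds 0) :=
        (tendsto_pow_mul_exp_neg_atTop_nhds_zero n).comp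
          (Tendsto.const_mul_atTop hb tendsto_id)
      exact hc.eventually (eventually_lt_nhds one_pos)
    rw [Asymptotics.isBigO_iff]
    refine ⟨(2 / b) ^ n, ?_⟩
    filter_upwards [eventually_ge_atTop 1, hT] with t ht1 ht2
    have ht0 : (0 : ℝ) < t := by linarith
    have hbt : (0 : ℝ) < b * t := by positivity
    have e1 : Real.exp (-(b * t)) ≤ ((b * t) ^ n)⁻¹ := by
      have h3 : ((b*t)^n)⁻¹ * ((b*t)^n * Real.exp (-(b*t))) ≤ ((b*t)^n)⁻¹ * 1 :=
        mul_le_mul_of_nonneg_left ht2.le (by positivity)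
      rwa [← mul_assoc, inv_mul_cancel₀ (by positivity), one_mul, mul_one] at h3
    rw [Real.norm_eq_abs, abs_of_pos (Real.exp_pos _), Real.norm_eq_abs,
      abs_of_pos (by positivity)]
    refine e1.trans ?_
    have e2 : (1 + t) ^ n ≤ (2 * t) ^ n := pow_le_pow_left₀ (by positivity) (by linarith) n
    have e3 : ((b * t) ^ n)⁻¹ = (2 / b) ^ n * ((2 * t) ^ n)⁻¹ := by
      rw [div_pow, mul_pow, mul_pow]
      field_simp
    rw [e3]
    exact mul_le_mul_of_nonneg_left (inv_anti₀ (by positivity) e2) (by positivity)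
  have hO : (fun x : EuclideanSpace ℝ (Fin d) => Real.exp (-(b * ‖x‖)))
      =O[cocompact (EuclideanSpace ℝ (Fin d))] (fun x => ((1 + ‖x‖) ^ n)⁻¹) :=
    h2.comp_tendsto tendsto_norm_cocompact_atTop
  exact hcont.locallyIntegrable.integrable_of_isBigO_cocompact hO (hg.integrableAtFilter _)


lemma laplace_integrable {d : ℕ} (h : EuclideanSpace ℝ (Fin d) → ℝ) (hcont : Continuous h)
    {m c R ε : ℝ} (hm : ∀ x, m ≤ h x) (hc : 0 < c)
    (hR : ∀ x : EuclideanSpace ℝ (Fin d), R ≤ ‖x‖ → c * ‖x‖ ≤ h x) (hε : 0 < ε) :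
    Integrable (fun x : EuclideanSpace ℝ (Fin d) => Real.exp (-h x / ε)) := by
  set G := fun x : EuclideanSpace ℝ (Fin d) =>
    Set.indicator (Metric.closedBall 0 R) (fun _ => Real.exp (-m / ε)) x
      + Real.exp (-(c / ε * ‖x‖)) with hG
  have hGint : Integrable G := by
    refine Integrable.add ?_ (integrable_exp_neg_mul_norm (div_pos hc hε))
    exact ((integrableOn_const measure_closedBall_lt_top.ne).integrable_indicator
      measurableSet_closedBall)
  refine hGint.mono' ((Real.continuous_exp.comp (hcont.neg.div_const ε)).aestronglyMeasurable) ?_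
  refine Filter.Eventually.of_forall fun x => ?_
  rw [Real.norm_eq_abs, abs_of_pos (Real.exp_pos _)]
  rcases le_or_gt R ‖x‖ with hx | hx
  · have h1 : Real.exp (-h x / ε) ≤ Real.exp (-(c / ε * ‖x‖)) := by
      apply Real.exp_le_exp.2
      rw [neg_div, neg_le_neg_iff, div_mul_eq_mul_div]
      gcongr
      exact hR x hx
    refine h1.trans ?_
    exact le_add_of_nonneg_left (Set.indicator_nonneg (fun _ _ => (Real.exp_pos _).le) x)
  · have hmem : x ∈ Metric.closedBall (0 : EuclideanSpace ℝ (Fin d)) R := by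
      simpa [Metric.mem_closedBall, dist_zero_right] using hx.le
    have h1 : Real.exp (-h x / ε) ≤ Real.exp (-m / ε) := by
      apply Real.exp_le_exp.2
      gcongr
      · linarith [hm x]
    calc Real.exp (-h x / ε) ≤ Real.exp (-m / ε) := h1
    _ ≤ G x := by
        rw [hG]
        simp only [Set.indicator_of_mem hmem]
        exact le_add_of_nonneg_right (Real.exp_pos _).le

lemma laplace_int_pos {d : ℕ} {f : EuclideanSpace ℝ (Fin d) → ℝ} (hint : Integrable f)
    (hf : ∀ x, 0 < f x) : 0 < ∫ x, f x := by
  rw [integral_pos_iff_support_of_nonneg_ae (Filter.Eventually.of_forall fun x => (hf x).le) hint]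
  have hs : Function.support f = Set.univ := Set.eq_univ_of_forall fun x => (hf x).ne'
  rw [hs]
  exact isOpen_univ.measure_pos volume Set.univ_nonempty


lemma laplace_div_bound {m z M : ℝ} (hm : m ≤ z) (hM : 1 ≤ M) : min m 0 ≤ z / M := by
  have hM0 : (0 : ℝ) < M := by linarith
  rcases le_total 0 m with h0 | h0
  · exact (min_le_right m 0).trans (div_nonneg (h0.trans hm) hM0.le)
  · refine (min_le_left m 0).trans ?_
    rw [le_div_iff₀ hM0]
    nlinarith


end LaplaceAux

section
open Metric

/-- Laplace asymptotics for `∫ exp (-h x / ε)` on `ℝ^d`: if `h` is continuous, bounded below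
and has superlinear growth (in the liminf sense over spheres), then
`ε log ∫ exp (-h x / ε) dx → -inf h` as `ε → 0⁺`. -/
theorem stmt_0 {d : ℕ} (h : EuclideanSpace ℝ (Fin d) → ℝ)
    (hcont : Continuous h) (hbdd : BddBelow (Set.range h))
    (hgrowth : 0 < Filter.liminf
      (fun M : ℝ => ⨅ x : {x : EuclideanSpace ℝ (Fin d) // ‖x‖ = M}, h x.1 / M) atTop) :
    Tendsto (fun ε : ℝ => ε * Real.log (∫ x, Real.exp (-h x / ε)))
      (nhdsWithin 0 (Set.Ioi 0)) (nhds (-(⨅ x, h x))) := by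
  set m : ℝ := ⨅ x, h x with hmdef
  have hm : ∀ x, m ≤ h x := fun x => ciInf_le hbdd x
  -- growth: get c > 0 and R with h x ≥ c ‖x‖ outside ball R
  set c : ℝ := (Filter.liminf
      (fun M : ℝ => ⨅ x : {x : EuclideanSpace ℝ (Fin d) // ‖x‖ = M}, h x.1 / M) atTop) / 2
    with hcdef
  have hc : 0 < c := by positivity
  have hbound : ∀ᶠ M in atTop,
      min m 0 ≤ ⨅ x : {x : EuclideanSpace ℝ (Fin d) // ‖x‖ = M}, h x.1 / M := by
    filter_upwards [eventually_ge_atTop (1 : ℝ)] with M hM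
    rcases isEmpty_or_nonempty {x : EuclideanSpace ℝ (Fin d) // ‖x‖ = M} with hE | hE
    · rw [Real.iInf_of_isEmpty]
      exact min_le_right _ _
    · exact le_ciInf fun y => laplace_div_bound (hm y.1) hM
  have hlim : ∀ᶠ M in atTop,
      c < ⨅ x : {x : EuclideanSpace ℝ (Fin d) // ‖x‖ = M}, h x.1 / M :=
    eventually_lt_of_lt_liminf (by linarith [half_lt_self hgrowth])
      (isBoundedUnder_of_eventually_ge hbound)
  obtain ⟨R₀, hR₀⟩ := eventually_atTop.mp (hlim.and (eventually_ge_atTop (1 : ℝ)))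
  set R : ℝ := max R₀ 1 with hRdef
  have hRx : ∀ x : EuclideanSpace ℝ (Fin d), R ≤ ‖x‖ → c * ‖x‖ ≤ h x := by
    intro x hx
    obtain ⟨h1, h2⟩ := hR₀ ‖x‖ ((le_max_left _ _).trans hx)
    have hx0 : (0 : ℝ) < ‖x‖ := by linarith
    have hbb : BddBelow (Set.range fun y : {y : EuclideanSpace ℝ (Fin d) // ‖y‖ = ‖x‖} =>
        h y.1 / ‖x‖) := ⟨min m 0, Set.forall_mem_range.2 fun y => laplace_div_bound (hm y.1) h2⟩
    have hle := ciInf_le hbb (⟨x, rfl⟩ : {y : EuclideanSpace ℝ (Fin d) // ‖y‖ = ‖x‖})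
    have : c < h x / ‖x‖ := lt_of_lt_of_le h1 hle
    rw [lt_div_iff₀ hx0] at this
    exact this.le
  -- integrability and positivity for each ε
  have hfint : ∀ ε : ℝ, 0 < ε →
      Integrable (fun x : EuclideanSpace ℝ (Fin d) => Real.exp (-h x / ε)) :=
    fun ε hε => laplace_integrable h hcont hm hc hRx hε
  have hIpos : ∀ ε : ℝ, 0 < ε →
      0 < ∫ x, Real.exp (-h x / ε) :=
    fun ε hε => laplace_int_pos (hfint ε hε) fun x => Real.exp_pos _
  -- upper bound constant
  set K : ℝ := ∫ x, Real.exp (m - h x) with hKdef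
  have hKint : Integrable (fun x : EuclideanSpace ℝ (Fin d) => Real.exp (m - h x)) := by
    have heq : (fun x : EuclideanSpace ℝ (Fin d) => Real.exp (m - h x))
        = fun x => Real.exp m * Real.exp (-h x / 1) := by
      funext x
      rw [div_one, ← Real.exp_add]
      ring_nf
    rw [heq]
    exact (hfint 1 one_pos).const_mul _
  have hKpos : 0 < K := laplace_int_pos hKint fun x => Real.exp_pos _
  have hupper : ∀ ε : ℝ, 0 < ε → ε ≤ 1 →
      (∫ x, Real.exp (-h x / ε)) ≤ Real.exp (-m / ε) * K := by
    intro ε hε hε1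
    have hptwise : ∀ x, Real.exp (-h x / ε) ≤ Real.exp (-m / ε) * Real.exp (m - h x) := by
      intro x
      rw [← Real.exp_add]
      apply Real.exp_le_exp.2
      have hkey : -h x ≤ -m + (m - h x) * ε := by nlinarith [hm x]
      calc -h x / ε ≤ (-m + (m - h x) * ε) / ε := by gcongr -- ?
      _ = -m / ε + (m - h x) := by field_simp
    calc (∫ x, Real.exp (-h x / ε))
        ≤ ∫ x, Real.exp (-m / ε) * Real.exp (m - h x) :=
          integral_mono (hfint ε hε) (hKint.const_mul _) hptwise
      _ = Real.exp (-m / ε) * K := integral_const_mul _ _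
  -- conclude
  -- goal already in terms of m
  refine tendsto_order.2 ⟨?_, ?_⟩
  · -- lower bound
    intro a ha
    set δ : ℝ := (-m - a) / 2 with hδdef
    have hδ : 0 < δ := by simp only [hδdef]; linarith
    obtain ⟨x₀, hx₀⟩ := exists_lt_of_ciInf_lt (show ⨅ x, h x < m + δ by rw [← hmdef]; linarith)
    obtain ⟨r, hr, hball⟩ := Metric.isOpen_iff.1 (isOpen_Iio.preimage hcont) x₀ hx₀
    set v : ℝ := (volume (Metric.ball x₀ r)).toReal with hvdef
    have hv : 0 < v := ENNReal.toReal_pos (measure_ball_pos volume x₀ hr).ne'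
      measure_ball_lt_top.ne
    have hlow : ∀ ε : ℝ, 0 < ε →
        v * Real.exp (-(m + δ) / ε) ≤ ∫ x, Real.exp (-h x / ε) := by
      intro ε hε
      have h1 : v * Real.exp (-(m + δ) / ε)
          = ∫ _ in Metric.ball x₀ r, Real.exp (-(m + δ) / ε) := by
        rw [setIntegral_const, smul_eq_mul]
        rfl
      rw [h1]
      calc (∫ _ in Metric.ball x₀ r, Real.exp (-(m + δ) / ε))
          ≤ ∫ x in Metric.ball x₀ r, Real.exp (-h x / ε) := by
            refine setIntegral_mono_on (integrableOn_const measure_ball_lt_top.ne)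
              ((hfint ε hε).integrableOn) measurableSet_ball fun x hx => ?_
            apply Real.exp_le_exp.2
            have hxS : h x < m + δ := hball hx
            gcongr
        _ ≤ ∫ x, Real.exp (-h x / ε) :=
            setIntegral_le_integral (hfint ε hε)
              (Filter.Eventually.of_forall fun x => (Real.exp_pos _).le)
    have hεv : ∀ᶠ ε : ℝ in nhdsWithin 0 (Set.Ioi 0), -δ < ε * Real.log v := by
      have ht : Tendsto (fun ε : ℝ => ε * Real.log v) (nhdsWithin 0 (Set.Ioi 0)) (nhds 0) := by
        have h0 : Tendsto (fun ε : ℝ => ε * Real.log v) (nhds 0) (nhds (0 * Real.log v)) :=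
          (continuous_mul_right _).tendsto 0
        simpa using h0.mono_left
          (nhdsWithin_le_nhds : nhdsWithin (0:ℝ) (Set.Ioi 0) ≤ nhds 0)
      exact ht.eventually (eventually_gt_nhds (by linarith))
    filter_upwards [hεv, self_mem_nhdsWithin] with ε hεv hε
    have hε0 : (0 : ℝ) < ε := hε
    have hI := hIpos ε hε0
    have hlog : Real.log v + -(m + δ) / ε ≤ Real.log (∫ x, Real.exp (-h x / ε)) := by
      have := Real.log_le_log (by positivity) (hlow ε hε0)
      rwa [Real.log_mul hv.ne' (Real.exp_ne_zero _), Real.log_exp] at this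
    have h2 : ε * (Real.log v + -(m + δ) / ε) ≤ ε * Real.log (∫ x, Real.exp (-h x / ε)) :=
      mul_le_mul_of_nonneg_left hlog hε0.le
    have h3 : ε * (Real.log v + -(m + δ) / ε) = ε * Real.log v - (m + δ) := by
      field_simp
      ring
    have : a = -m - 2 * δ := by simp only [hδdef]; ring
    linarith [h2, h3]
  · -- upper bound
    intro b hb
    set δ : ℝ := b + m with hδdef
    have hδ : 0 < δ := by simp only [hδdef]; linarith
    have hεK : ∀ᶠ ε : ℝ in nhdsWithin 0 (Set.Ioi 0), ε * Real.log K < δ := by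
      have ht : Tendsto (fun ε : ℝ => ε * Real.log K) (nhdsWithin 0 (Set.Ioi 0)) (nhds 0) := by
        have h0 : Tendsto (fun ε : ℝ => ε * Real.log K) (nhds 0) (nhds (0 * Real.log K)) :=
          (continuous_mul_right _).tendsto 0
        simpa using h0.mono_left
          (nhdsWithin_le_nhds : nhdsWithin (0:ℝ) (Set.Ioi 0) ≤ nhds 0)
      exact ht.eventually (eventually_lt_nhds hδ)
    filter_upwards [hεK, Ioc_mem_nhdsGT_of_mem (Set.mem_Ico.2 ⟨le_refl (0:ℝ), one_pos⟩)]
      with ε hεK hε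
    obtain ⟨hε0, hε1⟩ := hε
    have hI := hIpos ε hε0
    have hlog : Real.log (∫ x, Real.exp (-h x / ε)) ≤ -m / ε + Real.log K := by
      have := Real.log_le_log hI (hupper ε hε0 hε1)
      rwa [Real.log_mul (Real.exp_ne_zero _) hKpos.ne', Real.log_exp] at this
    have h2 : ε * Real.log (∫ x, Real.exp (-h x / ε)) ≤ ε * (-m / ε + Real.log K) :=
      mul_le_mul_of_nonneg_left hlog hε0.le
    have h3 : ε * (-m / ε + Real.log K) = -m + ε * Real.log K := by
      field_simp
    have : b = -m + δ := by simp only [hδdef]; ring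
    linarith [h2, h3]

end
end

section
/- Fix $K\ge 1$ and a continuous rate function $I:\mathcal{X}\to[0,\infty)$ on a metric space $\mathcal{X}$ together with a continuous $F:\mathcal{X}\to\mathbb{R}$ bounded below. For $\boldsymbol{\alpha}$ with $1=\alpha_1\ge\cdots\ge\alpha_K\ge 0$ define $G(\boldsymbol{\alpha}) \doteq \inf_{(I_1,\dots,I_K): (I_1,F_1)\in D,\ 0\le I_j\le I_1\ (j\ge 2)}\big[2\sum_{j=1}^K \alpha_j I_j + 2F_1 - \min_{\sigma\in\Sigma_K}\sum_{j=1}^K \alpha_j I_{\sigma(j)}\big]$ where $D = \{(I(x),F(x)):x\in\mathcal{X}\}$. Then $\sup_{\boldsymbol{\alpha}} G(\boldsymbol{\alpha}) = \inf_{x\in\mathcal{X}}\{(2-(1/2)^{K-1})I(x)+2F(x)\}$, and the supremum is attained at $\boldsymbol{\alpha}^* = (1,1/2,1/4,\dots,(1/2)^{K-1})$. -/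
open Finset


lemma sub_one_val (K : ℕ) [NeZero K] (i : Fin K) :
    ((i - 1 : Fin K) : ℕ) = if (i : ℕ) = 0 then K - 1 else (i : ℕ) - 1 := by
  have hK : 0 < K := Nat.pos_of_ne_zero (NeZero.ne K)
  have h1 : ((1 : Fin K) : ℕ) = 1 % K := rfl
  rw [Fin.sub_def]
  simp only [h1]
  by_cases h : K = 1
  · subst h
    simp [Fin.val_eq_zero i]
  · have h1K : 1 % K = 1 := Nat.mod_eq_of_lt (by omega)
    rw [h1K]
    by_cases h0 : (i : ℕ) = 0
    · simp [h0, Nat.mod_eq_of_lt (by omega : K - 1 < K)]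
    · have hi : (i : ℕ) < K := i.isLt
      have heq : K - 1 + (i : ℕ) = ((i:ℕ) - 1) + K := by omega
      rw [heq, Nat.add_mod_right, Nat.mod_eq_of_lt (by omega)]
      simp [h0]

-- cyclic identity
lemma cyclic_id (K : ℕ) [NeZero K] (Iv : Fin K → ℝ) :
    2 * ∑ j : Fin K, (1/2 : ℝ)^(j:ℕ) * Iv j
      - ∑ j : Fin K, (1/2 : ℝ)^(j:ℕ) * Iv (Equiv.addRight (1 : Fin K) j)
      = (2 - (1/2 : ℝ)^(K-1)) * Iv 0 := by
  have hK : 0 < K := Nat.pos_of_ne_zero (NeZero.ne K)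
  have hre : ∑ j : Fin K, (1/2 : ℝ)^(j:ℕ) * Iv (Equiv.addRight (1 : Fin K) j)
      = ∑ i : Fin K, (1/2 : ℝ)^(((i - 1 : Fin K)):ℕ) * Iv i := by
    rw [← Equiv.sum_comp (Equiv.addRight (1 : Fin K))
      (fun i => (1/2 : ℝ)^(((i - 1 : Fin K)):ℕ) * Iv i)]
    apply Finset.sum_congr rfl
    intro j _
    simp
  rw [hre, Finset.mul_sum, ← Finset.sum_sub_distrib]
  rw [Finset.sum_eq_single_of_mem (0 : Fin K) (Finset.mem_univ _)]
  · rw [sub_one_val]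
    simp [Fin.val_zero]
    ring
  · intro b _ hb
    have hb0 : (b : ℕ) ≠ 0 := by
      exact fun h => hb (Fin.ext (by rw [h, Fin.val_zero]))
    rw [sub_one_val]
    simp only [hb0, if_false]
    obtain ⟨m, hm⟩ : ∃ m, (b : ℕ) = m + 1 := ⟨(b:ℕ) - 1, by omega⟩
    rw [hm]
    simp [pow_succ]
    ring

-- sum over any subset of given card is at least the sum over the tail Ici j
lemma sum_tail_le (K : ℕ) (α : Fin K → ℝ) (hmono : Antitone α) (j : Fin K)
    (P : Finset (Fin K)) (hcard : P.card = (Finset.Ici j).card) :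
    ∑ i ∈ Finset.Ici j, α i ≤ ∑ i ∈ P, α i := by
  classical
  set Q := Finset.Ici j with hQ
  have hcards : ((Q \ P).card : ℕ) = (P \ Q).card := Finset.card_sdiff_comm hcard.symm
  have h1 : ∑ i ∈ Q \ P, α i ≤ (Q \ P).card • α j := by
    apply Finset.sum_le_card_nsmul
    intro x hx
    have : j ≤ x := by
      have := (Finset.mem_sdiff.mp hx).1
      simpa [hQ] using this
    exact hmono this
  have h2 : (P \ Q).card • α j ≤ ∑ i ∈ P \ Q, α i := by
    apply Finset.card_nsmul_le_sum
    intro x hx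
    have hx2 : ¬ j ≤ x := by
      have := (Finset.mem_sdiff.mp hx).2
      simpa [hQ] using this
    exact hmono (le_of_lt (lt_of_not_ge hx2))
  have h3 : ∑ i ∈ Q \ P, α i ≤ ∑ i ∈ P \ Q, α i := by
    calc ∑ i ∈ Q \ P, α i ≤ (Q \ P).card • α j := h1
    _ = (P \ Q).card • α j := by rw [hcards]
    _ ≤ ∑ i ∈ P \ Q, α i := h2
  have e1 : ∑ i ∈ Q ∩ P, α i + ∑ i ∈ Q \ P, α i = ∑ i ∈ Q, α i :=
    Finset.sum_inter_add_sum_sdiff Q P α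
  have e2 : ∑ i ∈ P ∩ Q, α i + ∑ i ∈ P \ Q, α i = ∑ i ∈ P, α i :=
    Finset.sum_inter_add_sum_sdiff P Q α
  have : Q ∩ P = P ∩ Q := Finset.inter_comm Q P
  rw [this] at e1
  linarith

-- existence of a good index j
lemma exists_good (K : ℕ) [NeZero K] (α : Fin K → ℝ) (h0 : α 0 = 1) (hmono : Antitone α) :
    ∃ j : Fin K, (1/2 : ℝ)^(K-1) + ∑ i ∈ Finset.Ioi j, α i ≤ α j := by
  classical
  have hK : 0 < K := Nat.pos_of_ne_zero (NeZero.ne K)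
  by_contra hcon
  push_neg at hcon
  set ε : ℝ := (1/2:ℝ)^(K-1) with hε
  have hεpos : 0 < ε := by positivity
  -- key: ∀ n, ∀ j, j.val + n = K - 1 → tail sum ≤ (2^n - 1) ε
  have key : ∀ n : ℕ, ∀ j : Fin K, (j : ℕ) + n = K - 1 →
      ∑ i ∈ Finset.Ioi j, α i ≤ ((2:ℝ)^n - 1) * ε := by
    intro n
    induction n with
    | zero =>
      intro j hj
      have : Finset.Ioi j = ∅ := by
        ext i
        simp only [Finset.mem_Ioi, Finset.notMem_empty, iff_false]
        intro hi
        have := i.isLt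
        have := Fin.lt_def.mp hi
        omega
      simp [this]
    | succ n ih =>
      intro j hj
      have hjlt : (j : ℕ) + 1 < K := by omega
      set j' : Fin K := ⟨(j:ℕ) + 1, hjlt⟩ with hj'
      have hIoi : Finset.Ioi j = insert j' (Finset.Ioi j') := by
        ext i
        simp only [Finset.mem_Ioi, Finset.mem_insert, Fin.lt_def, Fin.ext_iff, hj']
        omega
      have hnot : j' ∉ Finset.Ioi j' := by simp
      have hT' : ∑ i ∈ Finset.Ioi j', α i ≤ ((2:ℝ)^n - 1) * ε := ih j' (by simp [hj']; omega)
      have hαj' : α j' < ε + ∑ i ∈ Finset.Ioi j', α i := hcon j'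
      rw [hIoi, Finset.sum_insert hnot]
      have : (2:ℝ)^(n+1) = 2 * 2^n := by ring
      nlinarith
  have h00 : ∑ i ∈ Finset.Ioi (0 : Fin K), α i ≤ ((2:ℝ)^(K-1) - 1) * ε :=
    key (K-1) 0 (by simp)
  have hfin : (1:ℝ) < ε + ∑ i ∈ Finset.Ioi (0:Fin K), α i := by
    have := hcon 0
    rw [h0] at this
    linarith
  have : (2:ℝ)^(K-1) * ε = 1 := by
    rw [hε]
    rw [← mul_pow]
    norm_num
  nlinarith

/-- Optimization part of Lemma 2: with
`G(α) = inf { 2∑ α_j I_j + 2F(x) - min_σ ∑ α_j I_{σ(j)} : I₁ = I(x), 0 ≤ I_j ≤ I₁ }`,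
the supremum of `G` over admissible temperature vectors `1 = α₁ ≥ ⋯ ≥ α_K ≥ 0` equals
`inf_x [(2 - (1/2)^(K-1)) I(x) + 2 F(x)]`, and is attained at `α* = (1, 1/2, …, (1/2)^(K-1))`. -/
theorem stmt_8 {X : Type*} [MetricSpace X] [Nonempty X] (K : ℕ) [NeZero K]
    (I : X → ℝ) (hIcont : Continuous I) (hInonneg : ∀ x, 0 ≤ I x)
    (hIcomp : ∀ M : ℝ, IsCompact {x : X | I x ≤ M})
    (F : X → ℝ) (hFcont : Continuous F) (hFbdd : BddBelow (Set.range F))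
    (G : (Fin K → ℝ) → ℝ)
    (hG : ∀ α, G α = sInf {v : ℝ | ∃ (x : X) (Iv : Fin K → ℝ), Iv 0 = I x ∧
        (∀ j, 0 ≤ Iv j ∧ Iv j ≤ Iv 0) ∧
        v = 2 * ∑ j, α j * Iv j + 2 * F x
          - ⨅ σ : Equiv.Perm (Fin K), ∑ j, α j * Iv (σ j)}) :
    IsGreatest (G '' {α : Fin K → ℝ | α 0 = 1 ∧ Antitone α ∧ ∀ j, 0 ≤ α j})
        (⨅ x : X, ((2 - (1/2 : ℝ) ^ (K - 1)) * I x + 2 * F x)) ∧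
      G (fun j => (1/2 : ℝ) ^ (j : ℕ))
        = ⨅ x : X, ((2 - (1/2 : ℝ) ^ (K - 1)) * I x + 2 * F x) := by
  classical
  have hK : 0 < K := Nat.pos_of_ne_zero (NeZero.ne K)
  obtain ⟨b, hb⟩ := hFbdd
  have hbF : ∀ x, b ≤ F x := fun x => hb ⟨x, rfl⟩
  set ε : ℝ := (1/2 : ℝ)^(K-1) with hε
  have hε0 : 0 < ε := by positivity
  have hε1 : ε ≤ 1 := by
    rw [hε]; exact pow_le_one₀ (by norm_num) (by norm_num)
  -- bddBelow of the x-infimum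
  have hbddX : BddBelow (Set.range fun x : X => (2 - ε) * I x + 2 * F x) := by
    refine ⟨2*b, ?_⟩
    rintro _ ⟨x, rfl⟩
    have h1 := hInonneg x
    have h2 := hbF x
    have h3 : 0 ≤ (2 - ε) * I x := mul_nonneg (by linarith) h1
    show 2*b ≤ (2 - ε) * I x + 2 * F x
    linarith
  have hTle : ∀ x : X, (⨅ x : X, ((2 - ε) * I x + 2 * F x)) ≤ (2 - ε) * I x + 2 * F x :=
    fun x => ciInf_le hbddX x
  -- lower bound for elements of the defining set
  have hSbdd : ∀ α : Fin K → ℝ, (∀ j, 0 ≤ α j) →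
      ∀ v ∈ {v : ℝ | ∃ (x : X) (Iv : Fin K → ℝ), Iv 0 = I x ∧
        (∀ j, 0 ≤ Iv j ∧ Iv j ≤ Iv 0) ∧
        v = 2 * ∑ j, α j * Iv j + 2 * F x
          - ⨅ σ : Equiv.Perm (Fin K), ∑ j, α j * Iv (σ j)}, 2*b ≤ v := by
    rintro α hnn v ⟨x, Iv, hIv0, hIvb, rfl⟩
    have hMle : (⨅ σ : Equiv.Perm (Fin K), ∑ j, α j * Iv (σ j)) ≤ ∑ j, α j * Iv j := by
      have := ciInf_le (Set.finite_range
        (fun σ : Equiv.Perm (Fin K) => ∑ j, α j * Iv (σ j))).bddBelow (Equiv.refl (Fin K))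
      simpa using this
    have hsnn : 0 ≤ ∑ j, α j * Iv j :=
      Finset.sum_nonneg fun j _ => mul_nonneg (hnn j) (hIvb j).1
    have := hbF x
    linarith
  -- nonemptiness of the defining set
  have hSne : ∀ α : Fin K → ℝ, Set.Nonempty {v : ℝ | ∃ (x : X) (Iv : Fin K → ℝ), Iv 0 = I x ∧
        (∀ j, 0 ≤ Iv j ∧ Iv j ≤ Iv 0) ∧
        v = 2 * ∑ j, α j * Iv j + 2 * F x
          - ⨅ σ : Equiv.Perm (Fin K), ∑ j, α j * Iv (σ j)} := by
    intro α
    obtain ⟨x₀⟩ := ‹Nonempty X›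
    exact ⟨_, ⟨x₀, fun _ => I x₀, rfl, fun j => ⟨hInonneg x₀, le_refl _⟩, rfl⟩⟩
  -- upper bound: G α ≤ T for admissible α
  have upper : ∀ α : Fin K → ℝ, α 0 = 1 → Antitone α → (∀ j, 0 ≤ α j) →
      G α ≤ ⨅ x : X, ((2 - ε) * I x + 2 * F x) := by
    intro α h0 hmono hnn
    rw [hG]
    apply le_ciInf
    intro x
    have ha : 0 ≤ I x := hInonneg x
    obtain ⟨j, hj⟩ := exists_good K α h0 hmono
    set S : Finset (Fin K) := insert 0 (Finset.Ioi j) with hS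
    set t : Fin K → ℝ := fun i => if i ∈ S then I x else 0 with ht
    have h0S : (0 : Fin K) ∈ S := Finset.mem_insert_self _ _
    have ht0 : t 0 = I x := by simp [ht, h0S]
    have h0notIoi : (0 : Fin K) ∉ Finset.Ioi j := by
      simp only [Finset.mem_Ioi, Fin.lt_def, Fin.val_zero]
      omega
    have hjnotIoi : j ∉ Finset.Ioi j := by simp
    -- sums of t
    have hsum_t : ∑ i, α i * t i = (α 0 + ∑ i ∈ Finset.Ioi j, α i) * I x := by
      have h1 : ∀ i, α i * t i = if i ∈ S then α i * I x else 0 := by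
        intro i; simp only [ht, mul_ite, mul_zero]
      rw [Finset.sum_congr rfl (fun i _ => h1 i), Finset.sum_ite_mem,
        Finset.univ_inter, hS, Finset.sum_insert h0notIoi, ← Finset.sum_mul, add_mul]
    -- min bound
    have hIci : Finset.Ici j = insert j (Finset.Ioi j) := by
      ext i
      simp only [Finset.mem_Ici, Finset.mem_insert, Finset.mem_Ioi, Fin.le_def, Fin.lt_def,
        Fin.ext_iff]
      omega
    have hcardS : S.card = (Finset.Ici j).card := by
      rw [hS, Finset.card_insert_of_notMem h0notIoi, hIci,
        Finset.card_insert_of_notMem hjnotIoi]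
    have hmin : ∀ σ : Equiv.Perm (Fin K),
        (∑ i ∈ Finset.Ici j, α i) * I x ≤ ∑ i, α i * t (σ i) := by
      intro σ
      set P : Finset (Fin K) := Finset.univ.filter (fun i => σ i ∈ S) with hP
      have hsum : ∑ i, α i * t (σ i) = ∑ i ∈ P, α i * I x := by
        simp only [ht, mul_ite, mul_zero]
        rw [Finset.sum_filter]
      have himg : P.image σ = S := by
        ext s
        simp only [Finset.mem_image, hP, Finset.mem_filter, Finset.mem_univ, true_and]
        constructor
        · rintro ⟨i, hi, rfl⟩; exact hi
        · intro hs; exact ⟨σ.symm s, by simpa using hs, by simp⟩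
      have hcardP : P.card = (Finset.Ici j).card := by
        rw [← hcardS, ← himg, Finset.card_image_of_injective _ σ.injective]
      rw [hsum, ← Finset.sum_mul]
      exact mul_le_mul_of_nonneg_right (sum_tail_le K α hmono j P hcardP) ha
    have hMge : (∑ i ∈ Finset.Ici j, α i) * I x ≤
        ⨅ σ : Equiv.Perm (Fin K), ∑ i, α i * t (σ i) := le_ciInf hmin
    -- the candidate value is in the set
    have hmem : (2 * ∑ i, α i * t i + 2 * F x
          - ⨅ σ : Equiv.Perm (Fin K), ∑ i, α i * t (σ i)) ∈
        {v : ℝ | ∃ (x : X) (Iv : Fin K → ℝ), Iv 0 = I x ∧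
        (∀ j, 0 ≤ Iv j ∧ Iv j ≤ Iv 0) ∧
        v = 2 * ∑ j, α j * Iv j + 2 * F x
          - ⨅ σ : Equiv.Perm (Fin K), ∑ j, α j * Iv (σ j)} := by
      refine ⟨x, t, ht0, ?_, rfl⟩
      intro i
      rw [ht0]
      constructor
      · simp only [ht]; split
        · exact ha
        · exact le_rfl
      · simp only [ht]; split
        · exact le_rfl
        · exact ha
    have hle := csInf_le ⟨2*b, fun v hv => hSbdd α hnn v hv⟩ hmem
    refine le_trans hle ?_
    have hIcisum : ∑ i ∈ Finset.Ici j, α i = α j + ∑ i ∈ Finset.Ioi j, α i := by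
      rw [hIci, Finset.sum_insert hjnotIoi]
    rw [hsum_t, h0]
    rw [hIcisum] at hMge
    -- final arithmetic
    set T := ∑ i ∈ Finset.Ioi j, α i
    have key : (2 + T - α j) * I x ≤ (2 - ε) * I x := by
      apply mul_le_mul_of_nonneg_right _ ha
      linarith [hj, hε]
    nlinarith [hMge, key]
  -- lower bound at α*
  have hstar0 : (fun j : Fin K => (1/2 : ℝ)^(j:ℕ)) 0 = 1 := by simp
  have hstarmono : Antitone (fun j : Fin K => (1/2 : ℝ)^(j:ℕ)) := by
    intro i k h
    exact pow_le_pow_of_le_one (by norm_num) (by norm_num) h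
  have hstarnn : ∀ j : Fin K, 0 ≤ (fun j : Fin K => (1/2 : ℝ)^(j:ℕ)) j := by
    intro j; positivity
  have hlow : (⨅ x : X, ((2 - ε) * I x + 2 * F x)) ≤ G (fun j : Fin K => (1/2 : ℝ)^(j:ℕ)) := by
    rw [hG]
    apply le_csInf (hSne _)
    rintro v ⟨x, Iv, hIv0, hIvb, rfl⟩
    show _ ≤ 2 * ∑ j : Fin K, (1/2:ℝ)^(j:ℕ) * Iv j + 2 * F x
      - ⨅ σ : Equiv.Perm (Fin K), ∑ j : Fin K, (1/2:ℝ)^(j:ℕ) * Iv (σ j)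
    have hM : (⨅ σ : Equiv.Perm (Fin K), ∑ j : Fin K, (1/2 : ℝ)^(j:ℕ) * Iv (σ j)) ≤
        ∑ j : Fin K, (1/2 : ℝ)^(j:ℕ) * Iv (Equiv.addRight (1 : Fin K) j) :=
      ciInf_le (Set.finite_range _).bddBelow (Equiv.addRight (1 : Fin K))
    have hid := cyclic_id K Iv
    have h1 := hTle x
    rw [← hε] at hid
    rw [← hIv0] at h1
    linarith
  have hstar_eq : G (fun j : Fin K => (1/2 : ℝ)^(j:ℕ))
      = ⨅ x : X, ((2 - ε) * I x + 2 * F x) :=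
    le_antisymm (upper _ hstar0 hstarmono hstarnn) hlow
  refine ⟨⟨⟨_, ⟨hstar0, hstarmono, hstarnn⟩, hstar_eq⟩, ?_⟩, hstar_eq⟩
  rintro v ⟨α, ⟨h0, hmono, hnn⟩, rfl⟩
  exact upper α h0 hmono hnn
end

section
/- Let $\{X^\varepsilon\}$ satisfy an LDP on a metric space $\mathcal{X}$ with rate function $I$. Let $f_1,\dots,f_N:\mathcal{X}\to\mathbb{R}$ be continuous, let $g_1,g_2$ be lower semi-continuous with $g_r - \min_{\ell} f_\ell$ bounded below for $r=1,2$, and let $B_1,B_2\subset\mathcal{X}$ be closed. Then $\liminf_{\varepsilon\to0}-\varepsilon\log E\Big[\frac{e^{-(g_1(X^\varepsilon)+g_2(X^\varepsilon))/\varepsilon}}{(\sum_{\ell=1}^N e^{-f_\ell(X^\varepsilon)/\varepsilon})^2} 1_{B_1}(X^\varepsilon) 1_{B_2}(X^\varepsilon)\Big] \ge \min_{r\in\{1,2\}} \inf_{x\in B_r}\big[2g_r(x)+I(x)-2\min_{\ell} f_\ell(x)\big]$. -/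
open Filter MeasureTheory
open scoped ENNReal
open Set

/-- Large deviation principle with scaling `ε` for a family of measures `μ ε` as `ε → 0⁺`,
with rate function `I` (extended-nonnegative-valued); `ENNReal.log` takes values in `EReal`
with `log 0 = -∞`. -/
def IsLDP {Y : Type*} [TopologicalSpace Y] [MeasurableSpace Y]
    (μ : ℝ → Measure Y) (I : Y → ℝ≥0∞) : Prop :=
  (∀ G : Set Y, IsOpen G →
      -(⨅ x ∈ G, (I x : EReal)) ≤
        Filter.liminf (fun ε : ℝ => (ε : EReal) * ENNReal.log (μ ε G))
          (nhdsWithin 0 (Set.Ioi 0))) ∧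
  (∀ C : Set Y, IsClosed C →
      Filter.limsup (fun ε : ℝ => (ε : EReal) * ENNReal.log (μ ε C))
        (nhdsWithin 0 (Set.Ioi 0)) ≤ -(⨅ x ∈ C, (I x : EReal)))

lemma varadhan_closed
    {X : Type*} [MetricSpace X] [MeasurableSpace X] [BorelSpace X]
    (μ : ℝ → Measure X) (hprob : ∀ ε > (0:ℝ), IsProbabilityMeasure (μ ε))
    (I : X → ℝ≥0∞)
    (hU : ∀ C : Set X, IsClosed C →
        Filter.limsup (fun ε : ℝ => (ε : EReal) * ENNReal.log (μ ε C))
          (nhdsWithin 0 (Set.Ioi 0)) ≤ -(⨅ x ∈ C, (I x : EReal)))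
    (φ : X → ℝ) (hφ : LowerSemicontinuous φ) (m : ℝ) (hm : ∀ x, m ≤ φ x)
    (C : Set X) (hC : IsClosed C) :
    (⨅ x ∈ C, ((φ x : EReal) + (I x : EReal))) ≤
      Filter.liminf (fun ε : ℝ => -((ε : EReal) *
        ENNReal.log (∫⁻ x in C, ENNReal.ofReal (Real.exp (-φ x / ε)) ∂(μ ε))))
        (nhdsWithin 0 (Set.Ioi 0)) := by
  set l := nhdsWithin (0:ℝ) (Set.Ioi 0) with hl
  set L := ⨅ x ∈ C, ((φ x : EReal) + (I x : EReal)) with hL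
  set F := fun ε : ℝ => -((ε : EReal) *
      ENNReal.log (∫⁻ x in C, ENNReal.ofReal (Real.exp (-φ x / ε)) ∂(μ ε))) with hF
  have key : ∀ b : ℝ, (b : EReal) < L → (b : EReal) ≤ Filter.liminf F l := by
    intro b hb
    obtain ⟨b', hbb', hb'L⟩ := EReal.exists_between_coe_real hb
    have hbb'r : b < b' := by exact_mod_cast hbb'
    set δ : ℝ := (b' - b) / 3 with hδdef
    have hδ : 0 < δ := by rw [hδdef]; linarith
    set n : ℕ := ⌈(b' - m) / δ⌉₊ with hn
    have han : b' ≤ m + n * δ := by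
      have h1 : (b' - m) / δ ≤ (n : ℝ) := Nat.le_ceil _
      have := (div_le_iff₀ hδ).mp h1
      linarith
    set a : ℕ → ℝ := fun j => m + j * δ with ha
    set Cs : ℕ → Set X := fun j => C ∩ {x | φ x ≤ a (j + 1)} with hCs
    have hCs_closed : ∀ j, IsClosed (Cs j) := fun j =>
      hC.inter (hφ.isClosed_preimage (a (j + 1)))
    -- lower bound on the rate function over Cs j
    have hI : ∀ j : ℕ, ((b' - a (j + 1) : ℝ) : EReal) ≤ ⨅ x ∈ Cs j, (I x : EReal) := by
      intro j
      refine le_iInf₂ fun x hx => ?_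
      have h1 : ((b' : ℝ) : EReal) ≤ (φ x : EReal) + (I x : EReal) :=
        le_of_lt (lt_of_lt_of_le hb'L (iInf₂_le x hx.1))
      have h2 : ((b' : ℝ) : EReal) - (φ x : EReal) ≤ (I x : EReal) :=
        EReal.sub_le_of_le_add' h1
      refine le_trans ?_ h2
      rw [EReal.coe_sub]
      exact EReal.sub_le_sub (le_refl _) (EReal.coe_le_coe_iff.mpr hx.2)
    have hlimsup : ∀ j : ℕ,
        Filter.limsup (fun ε : ℝ => (ε : EReal) * ENNReal.log (μ ε (Cs j))) l ≤
          ((a (j + 1) - b' : ℝ) : EReal) := by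
      intro j
      refine (hU (Cs j) (hCs_closed j)).trans ?_
      rw [show ((a (j+1) - b' : ℝ) : EReal) = -((b' - a (j+1) : ℝ) : EReal) by
        rw [← EReal.coe_neg]; ring_nf]
      exact EReal.neg_le_neg_iff.mpr (hI j)
    have hevj : ∀ᶠ ε : ℝ in l, ∀ j ∈ Finset.range n,
        (ε : EReal) * ENNReal.log (μ ε (Cs j)) < ((a (j + 1) - b' + δ : ℝ) : EReal) := by
      rw [Filter.eventually_all_finset]
      intro j _
      refine eventually_lt_of_limsup_lt (lt_of_le_of_lt (hlimsup j) ?_)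
      exact_mod_cast (by linarith : a (j+1) - b' < a (j+1) - b' + δ)
    have hev2 : ∀ᶠ ε : ℝ in l, ε * Real.log (n + 1) ≤ δ := by
      have htend : Filter.Tendsto (fun ε : ℝ => ε * Real.log (n + 1)) l (nhds 0) := by
        have h0 : Filter.Tendsto (fun ε : ℝ => ε * Real.log (n + 1)) (nhds 0)
            (nhds (0 * Real.log (n + 1))) :=
          (continuous_id.mul continuous_const).tendsto 0
        rw [zero_mul] at h0
        exact h0.mono_left nhdsWithin_le_nhds
      exact htend.eventually (eventually_le_nhds hδ)
    have hmain : ∀ᶠ ε : ℝ in l, (b : EReal) ≤ F ε := by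
      filter_upwards [self_mem_nhdsWithin, hevj, hev2] with ε hε hj hlog
      have hεpos : (0:ℝ) < ε := hε
      have hεE : (0 : EReal) < (ε : EReal) := by exact_mod_cast hεpos
      haveI := hprob ε hεpos
      -- measure bounds
      have hμb : ∀ j ∈ Finset.range n,
          μ ε (Cs j) ≤ ENNReal.ofReal (Real.exp ((a (j + 1) - b' + δ) / ε)) := by
        intro j hjn
        have h1 : ENNReal.log (μ ε (Cs j)) ≤
            ((a (j + 1) - b' + δ : ℝ) : EReal) / (ε : EReal) := by
          rw [EReal.le_div_iff_mul_le hεE (EReal.coe_ne_top ε)]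
          rw [EReal.mul_comm]
          exact le_of_lt (hj j hjn)
        have h2 : μ ε (Cs j) ≤ EReal.exp (((a (j + 1) - b' + δ : ℝ) : EReal) / (ε : EReal)) := by
          calc μ ε (Cs j) = EReal.exp (ENNReal.log (μ ε (Cs j))) := (ENNReal.exp_log _).symm
            _ ≤ _ := EReal.exp_monotone h1
        rwa [← EReal.coe_div, EReal.exp_coe] at h2
      -- pointwise bound on the integrand
      have hpt : ∀ x ∈ C, ENNReal.ofReal (Real.exp (-φ x / ε)) ≤
          (∑ j ∈ Finset.range n,
            ENNReal.ofReal (Real.exp (-(a j) / ε)) * (Cs j).indicator 1 x) +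
            ENNReal.ofReal (Real.exp (-(a n) / ε)) := by
        intro x hx
        by_cases hcase : a n ≤ φ x
        · refine le_trans ?_ le_add_self
          apply ENNReal.ofReal_le_ofReal
          apply Real.exp_le_exp.mpr
          apply div_le_div_of_nonneg_right ?_ hεpos.le
          linarith
        · push_neg at hcase
          have hmx := hm x
          have hfloor_nonneg : 0 ≤ (φ x - m) / δ := div_nonneg (by linarith) hδ.le
          set j : ℕ := ⌊(φ x - m) / δ⌋₊ with hjdef
          have hjlt : j < n := by
            refine (Nat.floor_lt hfloor_nonneg).mpr ?_
            rw [div_lt_iff₀ hδ]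
            simp only [ha] at hcase
            linarith
          have hlow : a j ≤ φ x := by
            have h1 : (j : ℝ) ≤ (φ x - m) / δ := Nat.floor_le hfloor_nonneg
            have := (le_div_iff₀ hδ).mp h1
            simp only [ha]; linarith
          have hup : φ x ≤ a (j + 1) := by
            have h1 : (φ x - m) / δ < (j : ℝ) + 1 := Nat.lt_floor_add_one _
            have := (div_lt_iff₀ hδ).mp h1
            simp only [ha]; push_cast; linarith
          have hxCs : x ∈ Cs j := ⟨hx, hup⟩
          refine le_trans ?_ (le_add_right le_rfl)
          · refine le_trans ?_ (Finset.single_le_sum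
              (f := fun j => ENNReal.ofReal (Real.exp (-(a j) / ε)) * (Cs j).indicator 1 x)
              (fun _ _ => zero_le) (Finset.mem_range.mpr hjlt))
            simp only [Set.indicator_of_mem hxCs, Pi.one_apply, mul_one]
            apply ENNReal.ofReal_le_ofReal
            apply Real.exp_le_exp.mpr
            apply div_le_div_of_nonneg_right ?_ hεpos.le
            linarith
      -- integral bound
      set E : ℝ≥0∞ := ENNReal.ofReal (Real.exp ((2 * δ - b') / ε)) with hE
      have hCmeas : MeasurableSet C := hC.measurableSet
      have hJ1 : (∫⁻ x in C, ENNReal.ofReal (Real.exp (-φ x / ε)) ∂(μ ε)) ≤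
          (∑ j ∈ Finset.range n,
            ENNReal.ofReal (Real.exp (-(a j) / ε)) * μ ε (Cs j)) +
            ENNReal.ofReal (Real.exp (-(a n) / ε)) := by
        have hmeas : Measurable (fun x => (∑ j ∈ Finset.range n,
            ENNReal.ofReal (Real.exp (-(a j) / ε)) * (Cs j).indicator 1 x) +
            ENNReal.ofReal (Real.exp (-(a n) / ε))) := by
          apply Measurable.add _ measurable_const
          apply Finset.measurable_sum
          intro j _
          exact (measurable_one.indicator (hCs_closed j).measurableSet).const_mul _
        calc (∫⁻ x in C, ENNReal.ofReal (Real.exp (-φ x / ε)) ∂(μ ε)) ≤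
            ∫⁻ x in C, ((∑ j ∈ Finset.range n,
              ENNReal.ofReal (Real.exp (-(a j) / ε)) * (Cs j).indicator 1 x) +
              ENNReal.ofReal (Real.exp (-(a n) / ε))) ∂(μ ε) :=
              setLIntegral_mono hmeas hpt
          _ = (∑ j ∈ Finset.range n, ∫⁻ x in C,
              ENNReal.ofReal (Real.exp (-(a j) / ε)) * (Cs j).indicator 1 x ∂(μ ε)) +
              ENNReal.ofReal (Real.exp (-(a n) / ε)) * μ ε C := by
              rw [lintegral_add_right _ measurable_const, setLIntegral_const,
                lintegral_finset_sum]
              intro j _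
              exact (measurable_one.indicator (hCs_closed j).measurableSet).const_mul _
          _ ≤ _ := by
              gcongr with j hjr
              · calc ∫⁻ x in C, ENNReal.ofReal (Real.exp (-(a j) / ε)) *
                    (Cs j).indicator 1 x ∂(μ ε)
                    = ENNReal.ofReal (Real.exp (-(a j) / ε)) *
                      ∫⁻ x in C, (Cs j).indicator 1 x ∂(μ ε) := by
                      rw [lintegral_const_mul _
                        (measurable_one.indicator (hCs_closed j).measurableSet)]
                  _ ≤ ENNReal.ofReal (Real.exp (-(a j) / ε)) * μ ε (Cs j) := by
                      gcongr
                      rw [lintegral_indicator_one (hCs_closed j).measurableSet,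
                        Measure.restrict_apply (hCs_closed j).measurableSet]
                      exact measure_mono Set.inter_subset_left
              · calc ENNReal.ofReal (Real.exp (-(a n) / ε)) * μ ε C ≤
                    ENNReal.ofReal (Real.exp (-(a n) / ε)) * 1 := by
                      gcongr; exact prob_le_one
                  _ = _ := mul_one _
      have hterm : ∀ j ∈ Finset.range n,
          ENNReal.ofReal (Real.exp (-(a j) / ε)) * μ ε (Cs j) ≤ E := by
        intro j hjn
        calc ENNReal.ofReal (Real.exp (-(a j) / ε)) * μ ε (Cs j) ≤
            ENNReal.ofReal (Real.exp (-(a j) / ε)) *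
              ENNReal.ofReal (Real.exp ((a (j + 1) - b' + δ) / ε)) := by
              gcongr; exact hμb j hjn
          _ = ENNReal.ofReal (Real.exp (-(a j) / ε) * Real.exp ((a (j + 1) - b' + δ) / ε)) :=
              (ENNReal.ofReal_mul (Real.exp_nonneg _)).symm
          _ = E := by
              rw [← Real.exp_add, hE]
              congr 1
              rw [← add_div]
              congr 1
              simp only [ha]
              push_cast
              ring
      have hlast : ENNReal.ofReal (Real.exp (-(a n) / ε)) ≤ E := by
        apply ENNReal.ofReal_le_ofReal
        apply Real.exp_le_exp.mpr
        apply div_le_div_of_nonneg_right ?_ hεpos.le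
        simp only [ha]
        linarith
      have hJ : (∫⁻ x in C, ENNReal.ofReal (Real.exp (-φ x / ε)) ∂(μ ε)) ≤
          ((n : ℝ≥0∞) + 1) * E := by
        refine hJ1.trans ?_
        calc (∑ j ∈ Finset.range n,
            ENNReal.ofReal (Real.exp (-(a j) / ε)) * μ ε (Cs j)) +
            ENNReal.ofReal (Real.exp (-(a n) / ε)) ≤
            (∑ _j ∈ Finset.range n, E) + E := by
              exact add_le_add (Finset.sum_le_sum hterm) hlast
          _ = ((n : ℝ≥0∞) + 1) * E := by
              rw [Finset.sum_const, Finset.card_range, add_mul, one_mul, nsmul_eq_mul]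
      -- conclude
      have hR : ((n : ℝ≥0∞) + 1) * E =
          ENNReal.ofReal (((n : ℝ) + 1) * Real.exp ((2 * δ - b') / ε)) := by
        rw [ENNReal.ofReal_mul (by positivity), hE]
        congr 1
        rw [← ENNReal.ofReal_natCast n, ← ENNReal.ofReal_one,
          ← ENNReal.ofReal_add (by positivity) (by norm_num)]
      have hRpos : (0:ℝ) < ((n : ℝ) + 1) * Real.exp ((2 * δ - b') / ε) := by positivity
      have hlogJ : (ε : EReal) *
          ENNReal.log (∫⁻ x in C, ENNReal.ofReal (Real.exp (-φ x / ε)) ∂(μ ε)) ≤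
          ((-b : ℝ) : EReal) := by
        have h1 : ENNReal.log (∫⁻ x in C, ENNReal.ofReal (Real.exp (-φ x / ε)) ∂(μ ε)) ≤
            ((Real.log (((n : ℝ) + 1) * Real.exp ((2 * δ - b') / ε)) : ℝ) : EReal) := by
          rw [← ENNReal.log_ofReal_of_pos hRpos, ← hR]
          exact ENNReal.log_monotone hJ
        calc (ε : EReal) *
            ENNReal.log (∫⁻ x in C, ENNReal.ofReal (Real.exp (-φ x / ε)) ∂(μ ε)) ≤
            (ε : EReal) * ((Real.log (((n : ℝ) + 1) * Real.exp ((2 * δ - b') / ε)) : ℝ) : EReal) :=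
              mul_le_mul_of_nonneg_left h1 (le_of_lt hεE)
          _ = ((ε * Real.log (((n : ℝ) + 1) * Real.exp ((2 * δ - b') / ε)) : ℝ) : EReal) :=
              (EReal.coe_mul _ _).symm
          _ ≤ ((-b : ℝ) : EReal) := by
              apply EReal.coe_le_coe_iff.mpr
              rw [Real.log_mul (by positivity) (by positivity), Real.log_exp, mul_add,
                mul_div_cancel₀ _ (ne_of_gt hεpos)]
              have : (n:ℝ) + 1 = ((n + 1 : ℕ) : ℝ) := by push_cast; ring
              rw [this] at *
              have hb3 : 3 * δ = b' - b := by rw [hδdef]; ring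
              push_cast at hlog ⊢
              linarith
      rw [hF]
      simp only
      rw [show (b : EReal) = -((-b : ℝ) : EReal) by rw [EReal.coe_neg, neg_neg]]
      exact EReal.neg_le_neg_iff.mpr hlogJ
    exact Filter.le_liminf_of_le (h := hmain)
  by_contra hcon
  push_neg at hcon
  obtain ⟨b, hb1, hb2⟩ := EReal.exists_between_coe_real hcon
  exact absurd (key b hb2) (not_le.mpr hb1)
open scoped ENNReal

theorem stmt_13' {X : Type*} [MetricSpace X] [MeasurableSpace X] [BorelSpace X]
    {ι : Type*} [Fintype ι] [Nonempty ι]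
    (μ : ℝ → Measure X) (hprob : ∀ ε > (0 : ℝ), IsProbabilityMeasure (μ ε))
    (I : X → ℝ≥0∞)
    (hU : ∀ C : Set X, IsClosed C →
        Filter.limsup (fun ε : ℝ => (ε : EReal) * ENNReal.log (μ ε C))
          (nhdsWithin 0 (Set.Ioi 0)) ≤ -(⨅ x ∈ C, (I x : EReal)))
    (f : ι → X → ℝ) (hf : ∀ ℓ, Continuous (f ℓ))
    (g : Fin 2 → X → ℝ) (hg : ∀ r, LowerSemicontinuous (g r))
    (hbdd : ∀ r, BddBelow (Set.range fun x => g r x - ⨅ ℓ, f ℓ x))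
    (B : Fin 2 → Set X) (hB : ∀ r, IsClosed (B r)) :
    min
        (⨅ x ∈ B 0, (((2 * g 0 x - 2 * ⨅ ℓ, f ℓ x : ℝ) : EReal) + (I x : EReal)))
        (⨅ x ∈ B 1, (((2 * g 1 x - 2 * ⨅ ℓ, f ℓ x : ℝ) : EReal) + (I x : EReal))) ≤
      Filter.liminf
        (fun ε : ℝ => -((ε : EReal) *
          ENNReal.log (∫⁻ x in B 0 ∩ B 1,
            ENNReal.ofReal (Real.exp (-(g 0 x + g 1 x) / ε) /
              (∑ ℓ, Real.exp (-f ℓ x / ε)) ^ 2) ∂(μ ε))))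
        (nhdsWithin 0 (Set.Ioi 0)) := by
  set mf : X → ℝ := fun x => ⨅ ℓ, f ℓ x with hmf_def
  have hmf : Continuous mf := by
    have h1 : mf = fun x => Finset.univ.inf' Finset.univ_nonempty (fun ℓ => f ℓ x) := by
      funext x; rw [Finset.inf'_univ_eq_ciInf]
    rw [h1]
    exact Continuous.finset_inf'_apply Finset.univ_nonempty (fun ℓ _ => hf ℓ)
  set φ : X → ℝ := fun x => g 0 x + g 1 x - 2 * mf x with hφ_def
  have hφ : LowerSemicontinuous φ := by
    have h01 : LowerSemicontinuous fun x => g 0 x + g 1 x := (hg 0).add (hg 1)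
    have hc : Continuous fun x => -(2 * mf x) := (continuous_const.mul hmf).neg
    have := h01.add hc.lowerSemicontinuous
    simpa [hφ_def, sub_eq_add_neg] using this
  obtain ⟨m0, hm0⟩ := hbdd 0
  obtain ⟨m1, hm1⟩ := hbdd 1
  have hm : ∀ x, m0 + m1 ≤ φ x := by
    intro x
    have h0 : m0 ≤ g 0 x - mf x := hm0 ⟨x, rfl⟩
    have h1 : m1 ≤ g 1 x - mf x := hm1 ⟨x, rfl⟩
    simp only [hφ_def]
    linarith
  have hC : IsClosed (B 0 ∩ B 1) := (hB 0).inter (hB 1)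
  have hvar := varadhan_closed μ hprob I hU φ hφ (m0 + m1) hm (B 0 ∩ B 1) hC
  refine le_trans (le_trans ?_ hvar) ?_
  · -- min ≤ inf over intersection
    refine le_iInf₂ fun x hx => ?_
    have h0 := iInf₂_le (f := fun x _ => (((2 * g 0 x - 2 * ⨅ ℓ, f ℓ x : ℝ) : EReal) +
      (I x : EReal))) x hx.1
    have h1 := iInf₂_le (f := fun x _ => (((2 * g 1 x - 2 * ⨅ ℓ, f ℓ x : ℝ) : EReal) +
      (I x : EReal))) x hx.2
    rcases le_total (g 0 x) (g 1 x) with hcmp | hcmp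
    · refine le_trans (min_le_left _ _) (h0.trans ?_)
      refine add_le_add_left ?_ _
      refine EReal.coe_le_coe_iff.mpr ?_
      simp only [hφ_def, hmf_def]
      linarith
    · refine le_trans (min_le_right _ _) (h1.trans ?_)
      refine add_le_add_left ?_ _
      refine EReal.coe_le_coe_iff.mpr ?_
      simp only [hφ_def, hmf_def]
      linarith
  · -- liminf comparison
    refine Filter.liminf_le_liminf ?_ (by isBoundedDefault) (by isBoundedDefault)
    filter_upwards [self_mem_nhdsWithin] with ε hε
    have hεpos : (0 : ℝ) < ε := hε
    have hεE : (0 : EReal) ≤ (ε : EReal) := by exact_mod_cast hεpos.le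
    have hpt : ∀ x : X, ENNReal.ofReal (Real.exp (-(g 0 x + g 1 x) / ε) /
        (∑ ℓ, Real.exp (-f ℓ x / ε)) ^ 2) ≤ ENNReal.ofReal (Real.exp (-φ x / ε)) := by
      intro x
      apply ENNReal.ofReal_le_ofReal
      have hS : Real.exp (-(mf x) / ε) ≤ ∑ ℓ, Real.exp (-f ℓ x / ε) := by
        obtain ⟨ℓ0, hℓ0⟩ := exists_eq_ciInf_of_finite (f := fun ℓ => f ℓ x)
        have h2 : Real.exp (-f ℓ0 x / ε) ≤ ∑ ℓ, Real.exp (-f ℓ x / ε) :=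
          Finset.single_le_sum (f := fun ℓ => Real.exp (-f ℓ x / ε))
            (fun _ _ => Real.exp_nonneg _) (Finset.mem_univ ℓ0)
        have h3 : mf x = f ℓ0 x := hℓ0.symm
        rw [h3]
        exact h2
      have hS2 : Real.exp (-(2 * mf x) / ε) ≤ (∑ ℓ, Real.exp (-f ℓ x / ε)) ^ 2 := by
        have h1 : Real.exp (-(2 * mf x) / ε) = Real.exp (-(mf x) / ε) ^ 2 := by
          rw [← Real.exp_nat_mul]
          congr 1
          push_cast
          ring
        rw [h1]
        exact pow_le_pow_left₀ (Real.exp_nonneg _) hS 2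
      calc Real.exp (-(g 0 x + g 1 x) / ε) / (∑ ℓ, Real.exp (-f ℓ x / ε)) ^ 2 ≤
          Real.exp (-(g 0 x + g 1 x) / ε) / Real.exp (-(2 * mf x) / ε) := by
            gcongr
        _ = Real.exp (-φ x / ε) := by
            rw [← Real.exp_sub]
            congr 1
            rw [div_sub_div_same]
            congr 1
            simp only [hφ_def]
            ring
    have hJ : (∫⁻ x in B 0 ∩ B 1, ENNReal.ofReal (Real.exp (-(g 0 x + g 1 x) / ε) /
        (∑ ℓ, Real.exp (-f ℓ x / ε)) ^ 2) ∂(μ ε)) ≤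
        (∫⁻ x in B 0 ∩ B 1, ENNReal.ofReal (Real.exp (-φ x / ε)) ∂(μ ε)) := by
      have hφm : Measurable φ := by
        have := hφ.measurable
        exact this
      refine setLIntegral_mono ?_ (fun x _ => hpt x)
      exact ((hφm.neg.div_const ε).exp).ennreal_ofReal
    exact EReal.neg_le_neg_iff.mpr (mul_le_mul_of_nonneg_left (ENNReal.log_monotone hJ) hεE)

/-- Part 2 of Lemma 1: lower bound for ratio functionals. With `f_ℓ` continuous,
`g_1, g_2` lower semicontinuous with `g_r - min_ℓ f_ℓ` bounded below, and `B_1, B_2` closed,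
`liminf -ε log E[ e^{-(g₁+g₂)/ε} / (∑_ℓ e^{-f_ℓ/ε})² ⋅ 1_{B₁} 1_{B₂} ]
  ≥ min_r inf_{x ∈ B_r} [2 g_r(x) + I(x) - 2 min_ℓ f_ℓ(x)]`. -/
theorem stmt_13 {X : Type*} [MetricSpace X] [MeasurableSpace X] [BorelSpace X]
    {ι : Type*} [Fintype ι] [Nonempty ι]
    (μ : ℝ → Measure X) (hprob : ∀ ε > (0 : ℝ), IsProbabilityMeasure (μ ε))
    (I : X → ℝ≥0∞) (hLDP : IsLDP μ I)
    (f : ι → X → ℝ) (hf : ∀ ℓ, Continuous (f ℓ))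
    (g : Fin 2 → X → ℝ) (hg : ∀ r, LowerSemicontinuous (g r))
    (hbdd : ∀ r, BddBelow (Set.range fun x => g r x - ⨅ ℓ, f ℓ x))
    (B : Fin 2 → Set X) (hB : ∀ r, IsClosed (B r)) :
    min
        (⨅ x ∈ B 0, (((2 * g 0 x - 2 * ⨅ ℓ, f ℓ x : ℝ) : EReal) + (I x : EReal)))
        (⨅ x ∈ B 1, (((2 * g 1 x - 2 * ⨅ ℓ, f ℓ x : ℝ) : EReal) + (I x : EReal))) ≤
      Filter.liminf
        (fun ε : ℝ => -((ε : EReal) *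
          ENNReal.log (∫⁻ x in B 0 ∩ B 1,
            ENNReal.ofReal (Real.exp (-(g 0 x + g 1 x) / ε) /
              (∑ ℓ, Real.exp (-f ℓ x / ε)) ^ 2) ∂(μ ε))))
        (nhdsWithin 0 (Set.Ioi 0)) := by
  exact stmt_13' μ hprob I hLDP.2 f hf g hg hbdd B hB
end

section
/- Assume $\mu^\varepsilon(dx) = \frac{1}{Z^\varepsilon} e^{-I(x)/\varepsilon}\gamma(dx)$ on a Polish space $\mathcal{X}$, with $I:\mathcal{X}\to[0,\infty]$ measurable and $Z^\varepsilon\in(0,\infty)$. Fix $K\ge 1$ and $1=\alpha_1\ge\cdots\ge\alpha_K\ge 0$, let $X_1^\varepsilon,\dots,X_K^\varepsilon$ be independent with $X_j^\varepsilon\sim\mu^{\varepsilon/\alpha_j}$, define the weights $\rho^\varepsilon(\mathbf{x}) = e^{-\frac{1}{\varepsilon}\sum_j \alpha_j I(x_j)}/\sum_{\tau\in\Sigma_K} e^{-\frac{1}{\varepsilon}\sum_j \alpha_j I(x_{\tau(j)})}$, and for a measurable $F:\mathcal{X}\to\mathbb{R}$ bounded below set $\hat\eta^\varepsilon = \sum_{\sigma\in\Sigma_K}\rho^\varepsilon(\mathbf{X}^\varepsilon_\sigma)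 e^{-F(X^\varepsilon_{\sigma(1)})/\varepsilon}$. Then $E[\hat\eta^\varepsilon] = \int_{\mathcal{X}} e^{-F(x)/\varepsilon}\mu^\varepsilon(dx)$, i.e., the INS estimator is unbiased. -/
open MeasureTheory Finset
open scoped ENNReal

section Helpers

/-- lintegral of a product of single-coordinate functions over a pi measure. -/
lemma lintegral_pi_prod' {n : ℕ} {X : Type*} [MeasurableSpace X]
    (μ : Fin n → Measure X) [∀ i, SigmaFinite (μ i)]
    (f : Fin n → X → ℝ≥0∞) (hf : ∀ i, Measurable (f i)) :
    ∫⁻ x, ∏ i, f i (x i) ∂Measure.pi μ = ∏ i, ∫⁻ x, f i x ∂μ i := by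
  induction n with
  | zero =>
      simp [lintegral_const, Measure.pi_univ]
  | succ n ih =>
      have hmp := measurePreserving_piFinSuccAbove (fun i => μ i) 0
      set e := MeasurableEquiv.piFinSuccAbove (fun _ : Fin (n+1) => X) 0 with he
      have hφ : Measurable (fun p : X × (Fin n → X) =>
          f 0 p.1 * ∏ j, f (Fin.succ j) (p.2 j)) := by
        apply Measurable.mul
        · exact (hf 0).comp measurable_fst
        · exact Finset.measurable_prod _ fun j _ =>
            ((hf _).comp ((measurable_pi_apply j).comp measurable_snd))
      have key : ∫⁻ x, ∏ i, f i (x i) ∂Measure.pi μ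
          = ∫⁻ p : X × (Fin n → X), f 0 p.1 * ∏ j, f (Fin.succ j) (p.2 j)
              ∂((μ 0).prod (Measure.pi fun j => μ ((0 : Fin (n+1)).succAbove j))) := by
        rw [hmp.lintegral_map_equiv (fun p : X × (Fin n → X) =>
          f 0 p.1 * ∏ j, f (Fin.succ j) (p.2 j))]
        congr 1
        funext x
        have : e x = (x 0, fun j => x ((0 : Fin (n+1)).succAbove j)) := rfl
        rw [this]
        simp only
        rw [Fin.prod_univ_succ]
        simp [Fin.succAbove_zero]
      rw [key, lintegral_prod _ (hφ.aemeasurable)]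
      simp only
      have : ∀ a : X, ∫⁻ y, f 0 a * ∏ j, f (Fin.succ j) (y j)
          ∂(Measure.pi fun j => μ ((0 : Fin (n+1)).succAbove j))
          = f 0 a * ∏ j, ∫⁻ x, f (Fin.succ j) x ∂μ (Fin.succ j) := by
        intro a
        have hprod : Measurable fun y : Fin n → X => ∏ j, f (Fin.succ j) (y j) :=
          Finset.measurable_prod _ fun j _ => (hf _).comp (measurable_pi_apply j)
        rw [lintegral_const_mul _ hprod]
        congr 1
        have hih := ih (fun j => μ ((0 : Fin (n+1)).succAbove j)) (fun j => f (Fin.succ j))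
          (fun j => hf _)
        rw [hih]
        exact Finset.prod_congr rfl fun j _ => by rw [Fin.succAbove_zero]
      simp_rw [this]
      rw [lintegral_mul_const _ (hf 0), Fin.prod_univ_succ]

/-- pi of withDensity measures equals withDensity of pi with the product density. -/
lemma pi_withDensity' {n : ℕ} {X : Type*} [MeasurableSpace X]
    (γ : Measure X) [SigmaFinite γ]
    (f : Fin n → X → ℝ≥0∞) (hf : ∀ i, Measurable (f i))
    (μ : Fin n → Measure X) [∀ i, SigmaFinite (μ i)]
    (hμ : ∀ i, μ i = γ.withDensity (f i)) :
    Measure.pi μ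
      = (Measure.pi fun _ : Fin n => γ).withDensity (fun x => ∏ i, f i (x i)) := by
  refine Measure.pi_eq fun s hs => ?_
  rw [withDensity_apply _ (MeasurableSet.univ_pi hs), ← lintegral_indicator
    (MeasurableSet.univ_pi hs)]
  have hind : ∀ x : Fin n → X, (Set.univ.pi s).indicator (fun x => ∏ i, f i (x i)) x
      = ∏ i, (s i).indicator (f i) (x i) := by
    intro x
    by_cases hx : x ∈ Set.univ.pi s
    · rw [Set.indicator_of_mem hx]
      exact Finset.prod_congr rfl fun i _ =>
        (Set.indicator_of_mem (hx i (Set.mem_univ i)) _).symm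
    · rw [Set.indicator_of_notMem hx]
      rw [Set.mem_univ_pi] at hx
      push_neg at hx
      obtain ⟨i, hi⟩ := hx
      exact (Finset.prod_eq_zero (Finset.mem_univ i)
        (Set.indicator_of_notMem hi _)).symm
  simp_rw [hind]
  rw [lintegral_pi_prod' _ _ (fun i => (hf i).indicator (hs i))]
  apply Finset.prod_congr rfl
  intro i _
  rw [hμ i, withDensity_apply _ (hs i), ← lintegral_indicator (hs i)]

lemma lintegral_comp_perm' {n : ℕ} {X : Type*} [MeasurableSpace X]
    (γ : Measure X) [SigmaFinite γ] (σ : Equiv.Perm (Fin n))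
    (φ : (Fin n → X) → ℝ≥0∞) :
    ∫⁻ x, φ (fun j => x (σ j)) ∂Measure.pi (fun _ : Fin n => γ)
      = ∫⁻ x, φ x ∂Measure.pi (fun _ : Fin n => γ) := by
  have hmp := measurePreserving_piCongrLeft (fun _ : Fin n => γ) σ.symm
  have hT : ∀ x : Fin n → X,
      (MeasurableEquiv.piCongrLeft (fun _ : Fin n => X) σ.symm) x = fun b => x (σ b) := by
    intro x
    funext b
    have hb : b = σ.symm (σ b) := (Equiv.symm_apply_apply σ b).symm
    calc (MeasurableEquiv.piCongrLeft (fun _ : Fin n => X) σ.symm) x b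
        = (Equiv.piCongrLeft (fun _ : Fin n => X) σ.symm) x (σ.symm (σ b)) := by
          rw [MeasurableEquiv.coe_piCongrLeft, ← hb]
      _ = x (σ b) := Equiv.piCongrLeft_apply_apply _ _ _ (σ b)
  have := hmp.lintegral_map_equiv φ
  rw [this]
  apply lintegral_congr
  intro x
  rw [hT x]

end Helpers

/-- The INS estimator is unbiased: with `μ^{ε/α_j}(dx) = (1/Z^{ε/α_j}) e^{-α_j I(x)/ε} γ(dx)`,
independent samples `X_j ∼ μ^{ε/α_j}`, weights
`ρ^ε(x) = e^{-∑ α_j I(x_j)/ε} / ∑_τ e^{-∑ α_j I(x_{τ(j)})/ε}` and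
`η̂^ε = ∑_σ ρ^ε(X_σ) e^{-F(X_{σ(1)})/ε}`, one has `E η̂^ε = ∫ e^{-F/ε} dμ^ε`.
Here `nexp t = e^{-t}` for `t ∈ [0,∞]` (with `e^{-∞} = 0`). -/
theorem stmt_15 {X : Type*} [MetricSpace X] [CompleteSpace X] [SecondCountableTopology X]
    [MeasurableSpace X] [BorelSpace X]
    (γ : Measure X) [SigmaFinite γ]
    (I : X → ℝ≥0∞) (hI : Measurable I)
    (K : ℕ) [NeZero K] (α : Fin K → ℝ) (hα1 : α 0 = 1) (hαanti : Antitone α)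
    (hαnonneg : ∀ j, 0 ≤ α j)
    (ε : ℝ) (hε : 0 < ε)
    (nexp : ℝ≥0∞ → ℝ≥0∞)
    (hnexp : ∀ t, nexp t = if t = ⊤ then 0 else ENNReal.ofReal (Real.exp (-t.toReal)))
    (Z : Fin K → ℝ≥0∞)
    (hZ : ∀ j, Z j = ∫⁻ x, nexp (ENNReal.ofReal (α j) * I x / ENNReal.ofReal ε) ∂γ)
    (hZpos : ∀ j, 0 < Z j) (hZfin : ∀ j, Z j ≠ ⊤)
    (μ : Fin K → Measure X) [∀ j, SigmaFinite (μ j)]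
    (hμ : ∀ j, μ j = (Z j)⁻¹ •
      γ.withDensity (fun x => nexp (ENNReal.ofReal (α j) * I x / ENNReal.ofReal ε)))
    (F : X → ℝ) (hF : Measurable F) (hFbdd : BddBelow (Set.range F))
    (ρ : (Fin K → X) → ℝ)
    (hρ : ∀ x, ρ x =
      (nexp (∑ j, ENNReal.ofReal (α j) * I (x j) / ENNReal.ofReal ε)).toReal /
        ∑ τ : Equiv.Perm (Fin K),
          (nexp (∑ j, ENNReal.ofReal (α j) * I (x (τ j)) / ENNReal.ofReal ε)).toReal) :
    ∫ x, (∑ σ : Equiv.Perm (Fin K), ρ (fun j => x (σ j)) * Real.exp (-F (x (σ 0)) / ε))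
        ∂(Measure.pi μ)
      = ∫ x, Real.exp (-F x / ε) ∂(μ 0) := by
  classical
  -- basic properties of nexp
  have hnexp_ne_top : ∀ t, nexp t ≠ ⊤ := by
    intro t; rw [hnexp t]; split <;> simp [ENNReal.ofReal_ne_top]
  have hnexp_le_one : ∀ t, nexp t ≤ 1 := by
    intro t; rw [hnexp t]; split
    · exact zero_le_one
    · rw [← ENNReal.ofReal_one]
      exact ENNReal.ofReal_le_ofReal (Real.exp_le_one_iff.2 (neg_nonpos.2 ENNReal.toReal_nonneg))
  have hnexp_meas : Measurable nexp := by
    have : nexp = fun t => if t = ⊤ then 0 else ENNReal.ofReal (Real.exp (-t.toReal)) :=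
      funext hnexp
    rw [this]
    exact Measurable.ite (measurableSet_eq) measurable_const
      (ENNReal.measurable_ofReal.comp (Real.measurable_exp.comp ENNReal.measurable_toReal.neg))
  have hnexp_add : ∀ s t, nexp (s + t) = nexp s * nexp t := by
    intro s t
    rcases eq_or_ne s ⊤ with hs | hs
    · simp [hs, hnexp ⊤, hnexp (⊤ + t), top_add]
    rcases eq_or_ne t ⊤ with ht | ht
    · simp [ht, hnexp ⊤, hnexp (s + ⊤), add_top]
    rw [hnexp (s + t), hnexp s, hnexp t, if_neg (ENNReal.add_ne_top.2 ⟨hs, ht⟩),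
      if_neg hs, if_neg ht, ENNReal.toReal_add hs ht, neg_add, Real.exp_add,
      ENNReal.ofReal_mul (Real.exp_nonneg _)]
  have hnexp_zero : nexp 0 = 1 := by
    rw [hnexp 0]; simp
  have hnexp_sum : ∀ {ι : Type} (s : Finset ι) (f : ι → ℝ≥0∞),
      nexp (∑ i ∈ s, f i) = ∏ i ∈ s, nexp (f i) := by
    intro ι s f
    induction s using Finset.cons_induction with
    | empty => simpa using hnexp_zero
    | cons a s ha ih => rw [Finset.sum_cons, Finset.prod_cons, hnexp_add, ih]
  -- notation
  set g : Fin K → X → ℝ≥0∞ :=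
    fun j x => nexp (ENNReal.ofReal (α j) * I x / ENNReal.ofReal ε) with hgdef
  have hgm : ∀ j, Measurable (g j) :=
    fun j => hnexp_meas.comp ((hI.const_mul _).div_const _)
  have hg_le1 : ∀ j x, g j x ≤ 1 := fun j x => hnexp_le_one _
  have hg_ne_top : ∀ j x, g j x ≠ ⊤ := fun j x => hnexp_ne_top _
  set E : X → ℝ≥0∞ := fun x => ENNReal.ofReal (Real.exp (-F x / ε)) with hEdef
  have hEm : Measurable E :=
    ENNReal.measurable_ofReal.comp (Real.measurable_exp.comp (hF.neg.div_const ε))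
  set N : (Fin K → X) → ℝ≥0∞ := fun y => ∏ j, g j (y j) with hNdef
  set D : (Fin K → X) → ℝ≥0∞ :=
    fun y => ∑ τ : Equiv.Perm (Fin K), ∏ j, g j (y (τ j)) with hDdef
  have hNm : Measurable N :=
    Finset.measurable_prod _ fun j _ => (hgm j).comp (measurable_pi_apply j)
  have hDm : Measurable D :=
    Finset.measurable_sum _ fun τ _ =>
      Finset.measurable_prod _ fun j _ => (hgm j).comp (measurable_pi_apply (τ j))
  have hprod_le1 : ∀ (y : Fin K → X) (τ : Equiv.Perm (Fin K)),
      ∏ j, g j (y (τ j)) ≤ 1 := by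
    intro y τ
    calc ∏ j, g j (y (τ j)) ≤ ∏ _j : Fin K, 1 :=
          Finset.prod_le_prod' fun j _ => hg_le1 j _
      _ = 1 := Finset.prod_const_one
  have hN_ne_top : ∀ y, N y ≠ ⊤ := by
    intro y
    exact ne_top_of_le_ne_top ENNReal.one_ne_top (hprod_le1 y 1)
  have hD_ne_top : ∀ y, D y ≠ ⊤ := by
    intro y
    have : D y ≤ ∑ _τ : Equiv.Perm (Fin K), (1 : ℝ≥0∞) :=
      Finset.sum_le_sum fun τ _ => hprod_le1 y τ
    refine ne_top_of_le_ne_top ?_ this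
    simp [Finset.sum_const]
  have hN_le_D : ∀ y, N y ≤ D y := by
    intro y
    have := Finset.single_le_sum
      (f := fun τ : Equiv.Perm (Fin K) => ∏ j, g j (y (τ j)))
      (fun τ _ => zero_le) (Finset.mem_univ (1 : Equiv.Perm (Fin K)))
    simpa using this
  -- rewrite ρ
  have hρ' : ∀ y, ρ y = (N y).toReal / (D y).toReal := by
    intro y
    rw [hρ y]
    congr 1
    · rw [hnexp_sum]
    · rw [ENNReal.toReal_sum (fun τ _ => ne_top_of_le_ne_top ENNReal.one_ne_top
        (by rw [← hnexp_sum]; exact hnexp_le_one _))]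
      apply Finset.sum_congr rfl
      intro τ _
      rw [hnexp_sum]
  have hρnonneg : ∀ y, 0 ≤ ρ y := by
    intro y; rw [hρ' y]; positivity
  have hρm : Measurable ρ := by
    have : ρ = fun y => (N y).toReal / (D y).toReal := funext hρ'
    rw [this]
    exact (ENNReal.measurable_toReal.comp hNm).div (ENNReal.measurable_toReal.comp hDm)
  -- key pointwise identity
  have hkey : ∀ y, ENNReal.ofReal (ρ y) * D y = N y := by
    intro y
    by_cases hD0 : D y = 0
    · have hN0 : N y = 0 := le_antisymm (hD0 ▸ hN_le_D y) zero_le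
      rw [hD0, hN0, mul_zero]
    · have hDpos : 0 < (D y).toReal :=
        ENNReal.toReal_pos hD0 (hD_ne_top y)
      rw [hρ' y, ENNReal.ofReal_div_of_pos hDpos, ENNReal.ofReal_toReal (hN_ne_top y),
        ENNReal.ofReal_toReal (hD_ne_top y), ENNReal.div_mul_cancel hD0 (hD_ne_top y)]
  -- product measure as withDensity
  set ν : Measure (Fin K → X) := Measure.pi (fun _ : Fin K => γ) with hνdef
  set f : Fin K → X → ℝ≥0∞ := fun j x => (Z j)⁻¹ * g j x with hfdef
  have hfm : ∀ j, Measurable (f j) := fun j => (hgm j).const_mul _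
  have hμ' : ∀ j, μ j = γ.withDensity (f j) := by
    intro j
    rw [hμ j, ← withDensity_smul _ (hgm j)]
    rfl
  set G : (Fin K → X) → ℝ≥0∞ := fun x => ∏ j, f j (x j) with hGdef
  have hGm : Measurable G :=
    Finset.measurable_prod _ fun j _ => (hfm j).comp (measurable_pi_apply j)
  have hpi : Measure.pi μ = ν.withDensity G := pi_withDensity' γ f hfm μ hμ'
  -- convert both integrals to lintegrals
  have hterm_m : ∀ σ : Equiv.Perm (Fin K),
      Measurable (fun x : Fin K → X => ρ (fun j => x (σ j)) * Real.exp (-F (x (σ 0)) / ε)) := by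
    intro σ
    have hc : Measurable (fun x : Fin K → X => (fun j => x (σ j))) :=
      measurable_pi_lambda _ fun j => measurable_pi_apply (σ j)
    exact (hρm.comp hc).mul
      (Real.measurable_exp.comp ((hF.comp (measurable_pi_apply (σ 0))).neg.div_const ε))
  have hsum_m : Measurable (fun x : Fin K → X =>
      ∑ σ : Equiv.Perm (Fin K), ρ (fun j => x (σ j)) * Real.exp (-F (x (σ 0)) / ε)) :=
    Finset.measurable_sum _ fun σ _ => hterm_m σ
  have hterm_nonneg : ∀ (σ : Equiv.Perm (Fin K)) (x : Fin K → X),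
      0 ≤ ρ (fun j => x (σ j)) * Real.exp (-F (x (σ 0)) / ε) :=
    fun σ x => mul_nonneg (hρnonneg _) (Real.exp_nonneg _)
  rw [integral_eq_lintegral_of_nonneg_ae
      (Filter.Eventually.of_forall fun x => Finset.sum_nonneg fun σ _ => hterm_nonneg σ x)
      hsum_m.aestronglyMeasurable,
    integral_eq_lintegral_of_nonneg_ae (f := fun x => Real.exp (-F x / ε))
      (Filter.Eventually.of_forall fun x => Real.exp_nonneg _)
      (Real.measurable_exp.comp (hF.neg.div_const ε)).aestronglyMeasurable]
  congr 1
  -- main lintegral identity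
  set h : (Fin K → X) → ℝ≥0∞ := fun y => ENNReal.ofReal (ρ y) * E (y 0) with hhdef
  have hhm : Measurable h :=
    (ENNReal.measurable_ofReal.comp hρm).mul (hEm.comp (measurable_pi_apply 0))
  have hsplit : ∫⁻ x, ENNReal.ofReal
        (∑ σ : Equiv.Perm (Fin K), ρ (fun j => x (σ j)) * Real.exp (-F (x (σ 0)) / ε))
        ∂Measure.pi μ
      = ∑ σ : Equiv.Perm (Fin K), ∫⁻ x, h (fun j => x (σ j)) ∂Measure.pi μ := by
    have : ∀ x : Fin K → X, ENNReal.ofReal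
        (∑ σ : Equiv.Perm (Fin K), ρ (fun j => x (σ j)) * Real.exp (-F (x (σ 0)) / ε))
        = ∑ σ : Equiv.Perm (Fin K), h (fun j => x (σ j)) := by
      intro x
      rw [ENNReal.ofReal_sum_of_nonneg fun σ _ => hterm_nonneg σ x]
      apply Finset.sum_congr rfl
      intro σ _
      rw [ENNReal.ofReal_mul (hρnonneg _)]
    simp_rw [this]
    exact lintegral_finset_sum _ fun σ _ => hhm.comp
      (measurable_pi_lambda _ fun j => measurable_pi_apply (σ j))
  rw [hsplit]
  -- per-permutation change of variables
  have hstep : ∀ σ : Equiv.Perm (Fin K),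
      ∫⁻ x, h (fun j => x (σ j)) ∂Measure.pi μ
        = ∫⁻ y, G (fun j => y (σ.symm j)) * h y ∂ν := by
    intro σ
    have hc : Measurable (fun x : Fin K → X => (fun j => x (σ j))) :=
      measurable_pi_lambda _ fun j => measurable_pi_apply (σ j)
    have hcomp_m : Measurable fun x : Fin K → X => h (fun j => x (σ j)) := hhm.comp hc
    rw [hpi, lintegral_withDensity_eq_lintegral_mul _ hGm hcomp_m]
    have hφm : Measurable (fun y : Fin K → X => G (fun j => y (σ.symm j)) * h y) :=
      ((hGm.comp (measurable_pi_lambda _ fun j => measurable_pi_apply (σ.symm j))).mul hhm)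
    have := lintegral_comp_perm' γ σ (fun y => G (fun j => y (σ.symm j)) * h y)
    rw [← hνdef] at this
    rw [← this]
    apply lintegral_congr
    intro x
    simp only [Pi.mul_apply, Equiv.apply_symm_apply]
  simp_rw [hstep]
  have hsummand_m : ∀ σ : Equiv.Perm (Fin K),
      Measurable fun y : Fin K → X => G (fun j => y (σ.symm j)) * h y := fun σ =>
    ((hGm.comp (measurable_pi_lambda _ fun j => measurable_pi_apply (σ.symm j))).mul hhm)
  rw [← lintegral_finset_sum _ fun σ _ => hsummand_m σ]
  -- compute the sum of densities
  have hGsum : ∀ y : Fin K → X,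
      ∑ σ : Equiv.Perm (Fin K), G (fun j => y (σ.symm j)) * h y
        = (∏ j, (Z j)⁻¹) * (N y * E (y 0)) := by
    intro y
    have h1 : ∀ σ : Equiv.Perm (Fin K), G (fun j => y (σ.symm j))
        = (∏ j, (Z j)⁻¹) * ∏ j, g j (y (σ.symm j)) := by
      intro σ
      rw [hGdef]
      simp only
      rw [← Finset.prod_mul_distrib]
    simp_rw [h1]
    rw [← Finset.sum_mul, ← Finset.mul_sum]
    have h2 : ∑ σ : Equiv.Perm (Fin K), ∏ j, g j (y (σ.symm j)) = D y := by
      rw [hDdef]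
      exact Equiv.sum_comp (Equiv.inv (Equiv.Perm (Fin K)))
        (fun τ : Equiv.Perm (Fin K) => ∏ j, g j (y (τ j)))
    rw [h2, mul_assoc]
    congr 1
    rw [hhdef]
    simp only
    rw [← mul_assoc, mul_comm (D y) _, hkey y]
  simp_rw [hGsum]
  have hNE_m : Measurable fun y : Fin K → X => N y * E (y 0) :=
    hNm.mul (hEm.comp (measurable_pi_apply 0))
  rw [lintegral_const_mul _ hNE_m]
  -- factorize the product lintegral
  set f' : Fin K → X → ℝ≥0∞ :=
    fun j x => g j x * (if j = 0 then E x else 1) with hf'def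
  have hf'm : ∀ j, Measurable (f' j) := by
    intro j
    apply (hgm j).mul
    split
    · exact hEm
    · exact measurable_const
  have hNE : ∀ y : Fin K → X, N y * E (y 0) = ∏ j, f' j (y j) := by
    intro y
    rw [hf'def]
    simp only
    rw [Finset.prod_mul_distrib]
    congr 1
    rw [Finset.prod_eq_single 0 (fun b _ hb => if_neg hb) (fun hb => absurd (Finset.mem_univ 0) hb)]
    rw [if_pos rfl]
  simp_rw [hNE]
  rw [lintegral_pi_prod' _ f' hf'm]
  -- compute each factor
  have hfactor : ∀ j, j ≠ 0 → ∫⁻ x, f' j x ∂γ = Z j := by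
    intro j hj
    rw [hZ j]
    apply lintegral_congr
    intro x
    rw [hf'def]
    simp [if_neg hj]
    rfl
  have hfactor0 : ∫⁻ x, f' 0 x ∂γ = ∫⁻ x, g 0 x * E x ∂γ := by
    apply lintegral_congr
    intro x
    rw [hf'def]
    simp
  -- RHS lintegral
  have hRHS : ∫⁻ x, ENNReal.ofReal (Real.exp (-F x / ε)) ∂μ 0
      = (Z 0)⁻¹ * ∫⁻ x, g 0 x * E x ∂γ := by
    rw [hμ' 0, lintegral_withDensity_eq_lintegral_mul _ (hfm 0) hEm]
    have : ∀ x, (f 0 * E) x = (Z 0)⁻¹ * (g 0 x * E x) := by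
      intro x
      simp only [Pi.mul_apply, hfdef]
      ring
    simp_rw [this]
    rw [lintegral_const_mul (f := fun x => g 0 x * E x) _ ((hgm 0).mul hEm)]
  rw [hRHS]
  -- final bookkeeping
  rw [← Finset.prod_mul_distrib]
  rw [Finset.prod_eq_single 0 ?_ (fun hb => absurd (Finset.mem_univ 0) hb)]
  · rw [hfactor0]
  · intro j _ hj
    rw [hfactor j hj]
    exact ENNReal.inv_mul_cancel (hZpos j).ne' (hZfin j)
end
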